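/- arXiv:2602.03102 — 2 statements merged into one kernel-verified Lean document; each statement's English description precedes it below -/
import Mathlib

section
/- MBR-Gradient Proportionality (Dr.GRPO version): Let y_1,...,y_G be i.i.d. samples from π_old on a finite set Y, G ≥ 2, and let u : Y → ℝ. Define the Dr.GRPO estimator at sample i as ĝ_i = ρ_i(θ)·∇_θ log π_θ(y_i)·(u(y_i) − μ_G), where ρ_i(θ) = π_θ(y_i)/π_old(y_i) and μ_G is the group mean of u. Then E[ĝ_i] = ((G−1)/G)·∇_θ E_{y ∼ π_θ}[u(y)]. -/
/-- MBR-gradient proportionality (Dr.GRPO): the expectation (over the i.i.d.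
group) of the Dr.GRPO estimator at sample i equals ((G−1)/G) times the
gradient of the expected utility under π_θ. -/
theorem drgrpo_gradient_proportionality {Y : Type*} [Fintype Y] {d : ℕ}
    (G : ℕ) (hG : 2 ≤ G)
    (pold : Y → ℝ) (hpold : ∀ y, 0 < pold y) (hpsum : ∑ y, pold y = 1)
    (π : (Fin d → ℝ) → Y → ℝ) (hπpos : ∀ θ y, 0 < π θ y)
    (hπsum : ∀ θ, ∑ y, π θ y = 1)
    (hdiff : ∀ y, Differentiable ℝ (fun θ => π θ y))
    (θ : Fin d → ℝ) (u : Y → ℝ) (i : Fin G) :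
    ∑ ys : Fin G → Y,
      ((∏ j, pold (ys j)) *
        ((π θ (ys i) / pold (ys i)) *
          (u (ys i) - (1 / (G : ℝ)) * ∑ j, u (ys j)))) •
        fderiv ℝ (fun t => Real.log (π t (ys i))) θ
      = (((G : ℝ) - 1) / (G : ℝ)) •
          fderiv ℝ (fun t => ∑ y, π t y * u y) θ := by
  classical
  set v : Y → (Fin d → ℝ) →L[ℝ] ℝ := fun y => fderiv ℝ (fun t => π t y) θ with hv
  have hlog : ∀ y : Y, fderiv ℝ (fun t => Real.log (π t y)) θ = (π θ y)⁻¹ • v y := by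
    intro y
    exact (((hdiff y).differentiableAt.hasFDerivAt).log (ne_of_gt (hπpos θ y))).fderiv
  have hsum0 : ∑ y, v y = 0 := by
    have h1 : HasFDerivAt (fun t => ∑ y, π t y) (∑ y, v y) θ :=
      HasFDerivAt.fun_sum fun y _ => (hdiff y).differentiableAt.hasFDerivAt
    have h2 : (fun t : Fin d → ℝ => ∑ y, π t y) = fun _ => (1 : ℝ) := funext hπsum
    rw [h2] at h1
    simpa using h1.unique (hasFDerivAt_const 1 θ)
  have hrhs : fderiv ℝ (fun t => ∑ y, π t y * u y) θ = ∑ y, u y • v y := by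
    have h : HasFDerivAt (fun t => ∑ y, π t y * u y) (∑ y, u y • v y) θ :=
      HasFDerivAt.fun_sum fun y _ => ((hdiff y).differentiableAt.hasFDerivAt).mul_const (u y)
    exact h.fderiv
  simp only [hlog, hrhs]
  ext x
  simp only [ContinuousLinearMap.sum_apply, ContinuousLinearMap.smul_apply, smul_eq_mul]
  have hGpos : (0 : ℝ) < (G : ℝ) := by
    exact_mod_cast Nat.lt_of_lt_of_le Nat.zero_lt_two hG
  have hpne : ∀ y, pold y ≠ 0 := fun y => ne_of_gt (hpold y)
  have hπne : ∀ y, π θ y ≠ 0 := fun y => ne_of_gt (hπpos θ y)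
  have hZ : ∑ y, v y x = 0 := by
    rw [← ContinuousLinearMap.sum_apply, hsum0]; rfl
  set S : ℝ := ∑ y, u y * v y x with hS
  -- per-coordinate factor functions
  set f : Fin G → Y → ℝ := fun l y => if l = i then u y * v y x else pold y with hf
  set g : Fin G → Fin G → Y → ℝ :=
    fun j l y => (if l = i then v y x else pold y) * (if l = j then u y else 1) with hg
  -- closed forms of the products
  have prodf : ∀ ys : Fin G → Y,
      ∏ l, f l (ys l) = (u (ys i) * v (ys i) x) * ∏ l ∈ Finset.univ.erase i, pold (ys l) := by
    intro ys
    rw [← Finset.mul_prod_erase Finset.univ _ (Finset.mem_univ i)]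
    simp only [hf, if_pos rfl]
    congr 1
    exact Finset.prod_congr rfl fun l hl => by
      simp [Finset.mem_erase.mp hl |>.1]
  have prodg : ∀ (j : Fin G) (ys : Fin G → Y),
      ∏ l, g j l (ys l) =
        (v (ys i) x * ∏ l ∈ Finset.univ.erase i, pold (ys l)) * u (ys j) := by
    intro j ys
    simp only [hg]
    rw [Finset.prod_mul_distrib]
    congr 1
    · rw [← Finset.mul_prod_erase Finset.univ _ (Finset.mem_univ i)]
      simp only [if_pos rfl]
      congr 1
      exact Finset.prod_congr rfl fun l hl => by
        simp [Finset.mem_erase.mp hl |>.1]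
    · simpa using Finset.prod_ite_eq' Finset.univ j (fun l => u (ys l))
  have prodp : ∀ ys : Fin G → Y,
      ∏ l, pold (ys l) = pold (ys i) * ∏ l ∈ Finset.univ.erase i, pold (ys l) :=
    fun ys => (Finset.mul_prod_erase Finset.univ _ (Finset.mem_univ i)).symm
  -- pointwise rewriting of each summand
  have termeq : ∀ ys : Fin G → Y,
      (∏ j, pold (ys j)) *
          (π θ (ys i) / pold (ys i) * (u (ys i) - 1 / (G:ℝ) * ∑ j, u (ys j))) *
          ((π θ (ys i))⁻¹ * v (ys i) x)
        = (∏ l, f l (ys l)) - 1 / (G:ℝ) * ∑ j, ∏ l, g j l (ys l) := by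
    intro ys
    rw [prodf, prodp]
    have : ∑ j, ∏ l, g j l (ys l)
        = (v (ys i) x * ∏ l ∈ Finset.univ.erase i, pold (ys l)) * ∑ j, u (ys j) := by
      rw [Finset.mul_sum]
      exact Finset.sum_congr rfl fun j _ => prodg j ys
    rw [this]
    field_simp [hπne (ys i), hpne (ys i)]
  simp only [termeq, Finset.sum_sub_distrib, ← Finset.mul_sum]
  -- sum of the A-part
  have hA : ∑ ys : Fin G → Y, ∏ l, f l (ys l) = S := by
    rw [← Fintype.prod_sum]
    have h1 : ∀ l : Fin G, ∑ y, f l y = if l = i then S else 1 := by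
      intro l
      by_cases h : l = i <;> simp [hf, h, hpsum, hS]
    simp only [h1]
    simpa using Finset.prod_ite_eq' Finset.univ i (fun _ => S)
  -- sum of the B-parts
  have hB : ∀ j : Fin G, ∑ ys : Fin G → Y, ∏ l, g j l (ys l) = if j = i then S else 0 := by
    intro j
    rw [← Fintype.prod_sum]
    by_cases hji : j = i
    · subst hji
      have h1 : ∀ l : Fin G, ∑ y, g j l y = if l = j then S else 1 := by
        intro l
        by_cases h : l = j <;> simp [hg, h, hpsum, hS, mul_comm]
      simp only [h1]
      simpa using Finset.prod_ite_eq' Finset.univ j (fun _ => S)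
    · rw [if_neg hji]
      apply Finset.prod_eq_zero (Finset.mem_univ i)
      have hij : i ≠ j := fun h => hji h.symm
      simp [hg, hij, hZ]
  rw [Finset.sum_comm]
  simp only [hB]
  rw [hA]
  have : ∑ j : Fin G, (if j = i then S else 0) = S := by
    simpa using Finset.sum_ite_eq' Finset.univ i (fun _ => S)
  rw [this]
  have hmul : ∀ y : Y, u y • v y x = u y * v y x := fun _ => rfl
  field_simp [hS]
end

section
/- Non-asymptotic convergence rate: Let L : ℝ^d → ℝ be differentiable with L-Lipschitz gradient and bounded above by L* ≤ 1. Suppose at each step t the stochastic gradient ĝ_t satisfies E_t[ĝ_t] = α∇L(θ_t) with a fixed α > 0 and E_t[‖ĝ_t‖²] ≤ α²‖∇L(θ_t)‖² + σ². Run θ_{t+1} = θ_t + η·ĝ_t with η = 1/√T, where T ≥ (Lα)². Then (1/T)·Σ_{t=1}^T E[‖∇L(θ_t)‖²] ≤ (2(L* − L(θ₁)) + Lσ²)/(α√T). -/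
open MeasureTheory

local notation "⟪" x ", " y "⟫" => @inner ℝ _ _ x y

theorem descent_lemma {d : ℕ} (f : EuclideanSpace ℝ (Fin d) → ℝ) (L : ℝ) (hL : 0 ≤ L)
    (hdiff : Differentiable ℝ f)
    (hlip : ∀ x y, ‖gradient f x - gradient f y‖ ≤ L * ‖x - y‖)
    (x y : EuclideanSpace ℝ (Fin d)) :
    f x + ⟪gradient f x, y - x⟫ - L / 2 * ‖y - x‖ ^ 2 ≤ f y := by
  set v := y - x with hv
  have hkey : ∀ t : ℝ, HasDerivAt (fun s : ℝ => f (x + s • v))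
      ⟪gradient f (x + t • v), v⟫ t := by
    intro t
    have hc : HasDerivAt (fun s : ℝ => x + s • v) v t := by
      simpa using ((hasDerivAt_id t).smul_const v).const_add x
    have hf := (hdiff (x + t • v)).hasFDerivAt
    have h2 := hf.comp_hasDerivAt t hc
    have h3 : (fderiv ℝ f (x + t • v)) v = ⟪gradient f (x + t • v), v⟫ := by
      rw [gradient, ← InnerProductSpace.toDual_apply_apply]
      simp
    rw [h3] at h2
    exact h2
  set ψ : ℝ → ℝ := fun t => f (x + t • v) - t * ⟪gradient f x, v⟫ + L / 2 * t ^ 2 * ‖v‖ ^ 2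
    with hψ
  have hψd : ∀ t : ℝ, HasDerivAt ψ
      (⟪gradient f (x + t • v), v⟫ - ⟪gradient f x, v⟫ + L / 2 * (2 * t) * ‖v‖ ^ 2) t := by
    intro t
    have h1 := hkey t
    have h2 : HasDerivAt (fun s : ℝ => s * ⟪gradient f x, v⟫) ⟪gradient f x, v⟫ t := by
      simpa using (hasDerivAt_id t).mul_const ⟪gradient f x, v⟫
    have h3 : HasDerivAt (fun s : ℝ => L / 2 * s ^ 2 * ‖v‖ ^ 2) (L / 2 * (2 * t) * ‖v‖ ^ 2) t := by
      have := ((hasDerivAt_pow 2 t).const_mul (L / 2)).mul_const (‖v‖ ^ 2)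
      simpa [mul_comm, mul_assoc, mul_left_comm] using this
    exact (h1.sub h2).add h3
  have hmono : MonotoneOn ψ (Set.Icc (0 : ℝ) 1) := by
    apply monotoneOn_of_deriv_nonneg (convex_Icc 0 1)
    · have hd : Differentiable ℝ ψ := fun t => (hψd t).differentiableAt
      exact hd.continuous.continuousOn
    · intro t _
      exact (hψd t).differentiableAt.differentiableWithinAt
    · intro t ht
      rw [interior_Icc] at ht
      rw [(hψd t).deriv]
      have hb : |⟪gradient f (x + t • v) - gradient f x, v⟫| ≤ L * t * ‖v‖ ^ 2 := by
        refine (abs_real_inner_le_norm _ _).trans ?_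
        have h1 : ‖gradient f (x + t • v) - gradient f x‖ ≤ L * (t * ‖v‖) := by
          have := hlip (x + t • v) x
          simpa [norm_smul, abs_of_pos ht.1] using this
        calc ‖gradient f (x + t • v) - gradient f x‖ * ‖v‖
            ≤ L * (t * ‖v‖) * ‖v‖ := mul_le_mul_of_nonneg_right h1 (norm_nonneg _)
          _ = L * t * ‖v‖ ^ 2 := by ring
      rw [inner_sub_left] at hb
      have := abs_le.mp hb
      nlinarith [this.1]
  have h01 := hmono (Set.left_mem_Icc.mpr zero_le_one) (Set.right_mem_Icc.mpr zero_le_one)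
    zero_le_one
  have hψ0 : ψ 0 = f x := by simp [hψ]
  have hψ1 : ψ 1 = f y - ⟪gradient f x, v⟫ + L / 2 * ‖v‖ ^ 2 := by
    simp [hψ, hv]
  rw [hψ0, hψ1] at h01
  linarith



lemma coord_sq_le {d : ℕ} (x : EuclideanSpace ℝ (Fin d)) (i : Fin d) :
    (x i) ^ 2 ≤ ‖x‖ ^ 2 := by
  rw [PiLp.norm_sq_eq_of_L2]
  have : ‖x i‖ ^ 2 ≤ ∑ j, ‖x j‖ ^ 2 :=
    Finset.single_le_sum (f := fun j => ‖x j‖ ^ 2) (fun j _ => sq_nonneg _)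
      (Finset.mem_univ i)
  simpa [Real.norm_eq_abs, sq_abs] using this

lemma norm_sq_eq_sum {d : ℕ} (x : EuclideanSpace ℝ (Fin d)) :
    ‖x‖ ^ 2 = ∑ i, (x i) ^ 2 := by
  rw [PiLp.norm_sq_eq_of_L2]
  simp [Real.norm_eq_abs, sq_abs]

lemma inner_eq_sum {d : ℕ} (x y : EuclideanSpace ℝ (Fin d)) :
    ⟪x, y⟫ = ∑ i, x i * y i := by
  simp [PiLp.inner_apply, RCLike.inner_apply, conj_trivial, mul_comm]

lemma inner_integral_eq {d : ℕ} {Ω : Type*} (m : MeasurableSpace Ω)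
    [m0 : MeasurableSpace Ω] (hm : m ≤ m0)
    (μ : Measure Ω) [IsProbabilityMeasure μ]
    (g h : Ω → EuclideanSpace ℝ (Fin d)) (α : ℝ) (hα : 0 < α)
    (hgint : Integrable g μ) (hg2 : Integrable (fun ω => ‖g ω‖ ^ 2) μ)
    (hh2 : Integrable (fun ω => ‖h ω‖ ^ 2) μ)
    (hmean : μ[g|m] =ᵐ[μ] fun ω => α • h ω) :
    ∫ ω, ⟪h ω, g ω⟫ ∂μ = α * ∫ ω, ‖h ω‖ ^ 2 ∂μ := by
  have hαh_int : Integrable (fun ω => α • h ω) μ := integrable_condExp.congr hmean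
  have hh_int : Integrable h μ := by
    have h2 := hαh_int.smul α⁻¹
    have he : (α⁻¹ • fun ω => α • h ω) = h := by
      funext ω; simp [smul_smul, inv_mul_cancel₀ hα.ne']
    rwa [he] at h2
  have hαh_meas' : AEStronglyMeasurable[m] (fun ω => α • h ω) μ :=
    stronglyMeasurable_condExp.aestronglyMeasurable.congr hmean
  have hh_meas' : AEStronglyMeasurable[m] h μ := by
    have := hαh_meas'.const_smul α⁻¹
    refine this.congr (Filter.Eventually.of_forall fun ω => ?_)
    simp [smul_smul, inv_mul_cancel₀ hα.ne']
  have hh_meas : AEStronglyMeasurable h μ := by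
    obtain ⟨φ, hφ, hfφ⟩ := hh_meas'
    exact ⟨φ, hφ.mono hm, hfφ⟩
  have hg_meas : AEStronglyMeasurable g μ := hgint.1
  -- coordinate functions
  have hhi_meas' : ∀ i : Fin d, AEStronglyMeasurable[m] (fun ω => h ω i) μ := by
    intro i
    have := (EuclideanSpace.proj (𝕜 := ℝ) i).continuous.comp_aestronglyMeasurable
      hh_meas'
    exact this.congr (Filter.Eventually.of_forall fun ω => rfl)
  have hgi_int : ∀ i : Fin d, Integrable (fun ω => g ω i) μ := fun i => by
    simpa using (EuclideanSpace.proj (𝕜 := ℝ) i).integrable_comp hgint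
  have hhi_int : ∀ i : Fin d, Integrable (fun ω => h ω i) μ := fun i => by
    simpa using (EuclideanSpace.proj (𝕜 := ℝ) i).integrable_comp hh_int
  -- claim 1 : conditional expectation of coordinates
  have claim1 : ∀ i : Fin d,
      (fun ω => α * h ω i) =ᵐ[μ] μ[fun ω => g ω i|m] := by
    intro i
    refine ae_eq_condExp_of_forall_setIntegral_eq hm (hgi_int i) ?_ ?_ ?_
    · intro s _ _
      exact ((hhi_int i).const_mul α).restrict
    · intro s hs _
      have h1 : ∫ ω in s, g ω ∂μ = ∫ ω in s, α • h ω ∂μ := by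
        rw [← setIntegral_condExp hm hgint hs]
        exact setIntegral_congr_ae (hm s hs) (hmean.mono fun ω hω _ => hω)
      have h2 : ∫ ω in s, α * h ω i ∂μ
          = (EuclideanSpace.proj (𝕜 := ℝ) i) (∫ ω in s, α • h ω ∂μ) := by
        have := ContinuousLinearMap.integral_comp_comm
          (EuclideanSpace.proj (𝕜 := ℝ) i) (hαh_int.restrict (s := s))
        simpa using this
      have h3 : ∫ ω in s, g ω i ∂μ
          = (EuclideanSpace.proj (𝕜 := ℝ) i) (∫ ω in s, g ω ∂μ) := by
        have := ContinuousLinearMap.integral_comp_comm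
          (EuclideanSpace.proj (𝕜 := ℝ) i) (hgint.restrict (s := s))
        simpa using this
      rw [h2, ← h1, ← h3]
    · have := (hhi_meas' i).const_smul α
      exact this.congr (Filter.Eventually.of_forall fun ω => by simp)
  -- integrability of products
  have hprod_int : ∀ i : Fin d, Integrable (fun ω => h ω i * g ω i) μ := by
    intro i
    have hb : Integrable (fun ω => (‖h ω‖ ^ 2 + ‖g ω‖ ^ 2) / 2) μ := (hh2.add hg2).div_const 2
    refine hb.mono ?_ (Filter.Eventually.of_forall fun ω => ?_)
    · exact ((EuclideanSpace.proj (𝕜 := ℝ) i).continuous.comp_aestronglyMeasurable hh_meas).mul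
        ((EuclideanSpace.proj (𝕜 := ℝ) i).continuous.comp_aestronglyMeasurable hg_meas)
    · have h1 := coord_sq_le (h ω) i
      have h2 := coord_sq_le (g ω) i
      have h3 : ‖h ω‖ ^ 2 + ‖g ω‖ ^ 2 ≥ 0 := by positivity
      rw [Real.norm_eq_abs, Real.norm_eq_abs, abs_of_nonneg (by positivity : (0:ℝ) ≤ (‖h ω‖ ^ 2 + ‖g ω‖ ^ 2) / 2), abs_mul]
      nlinarith [sq_nonneg (|h ω i| - |g ω i|), sq_abs (h ω i), sq_abs (g ω i)]
  have hsq_int : ∀ i : Fin d, Integrable (fun ω => (h ω i) ^ 2) μ := by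
    intro i
    refine hh2.mono ?_ (Filter.Eventually.of_forall fun ω => ?_)
    · exact (((EuclideanSpace.proj (𝕜 := ℝ) i).continuous.comp_aestronglyMeasurable hh_meas).pow 2)
    · rw [Real.norm_eq_abs, Real.norm_eq_abs, abs_of_nonneg (sq_nonneg _),
        abs_of_nonneg (sq_nonneg _)]
      exact coord_sq_le (h ω) i
  -- key per-coordinate identity
  have hstep : ∀ i : Fin d,
      ∫ ω, h ω i * g ω i ∂μ = α * ∫ ω, (h ω i) ^ 2 ∂μ := by
    intro i
    have e1 : μ[(fun ω => h ω i) * (fun ω => g ω i)|m]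
        =ᵐ[μ] (fun ω => h ω i) * μ[fun ω => g ω i|m] :=
      condExp_mul_of_aestronglyMeasurable_left (hhi_meas' i) (hprod_int i) (hgi_int i)
    have e2 : (fun ω => h ω i) * μ[fun ω => g ω i|m]
        =ᵐ[μ] fun ω => h ω i * (α * h ω i) :=
      Filter.EventuallyEq.mul Filter.EventuallyEq.rfl (claim1 i).symm
    calc ∫ ω, h ω i * g ω i ∂μ
        = ∫ ω, (μ[(fun ω => h ω i) * (fun ω => g ω i)|m]) ω ∂μ :=
          (integral_condExp hm).symm
      _ = ∫ ω, h ω i * (α * h ω i) ∂μ := integral_congr_ae (e1.trans e2)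
      _ = α * ∫ ω, (h ω i) ^ 2 ∂μ := by
          rw [← integral_const_mul]
          congr 1; ext ω; ring
  calc ∫ ω, ⟪h ω, g ω⟫ ∂μ = ∫ ω, ∑ i, h ω i * g ω i ∂μ :=
        integral_congr_ae (Filter.Eventually.of_forall fun ω => inner_eq_sum _ _)
    _ = ∑ i, ∫ ω, h ω i * g ω i ∂μ := integral_finset_sum _ (fun i _ => hprod_int i)
    _ = ∑ i, α * ∫ ω, (h ω i) ^ 2 ∂μ := Finset.sum_congr rfl fun i _ => hstep i
    _ = α * ∑ i, ∫ ω, (h ω i) ^ 2 ∂μ := by rw [Finset.mul_sum]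
    _ = α * ∫ ω, ∑ i, (h ω i) ^ 2 ∂μ := by
        rw [integral_finset_sum _ (fun i _ => hsq_int i)]
    _ = α * ∫ ω, ‖h ω‖ ^ 2 ∂μ := by
        congr 1
        exact integral_congr_ae (Filter.Eventually.of_forall fun ω =>
          (norm_sq_eq_sum (h ω)).symm)


lemma inner_integrable' {d : ℕ} {Ω : Type*} [MeasurableSpace Ω] {μ : Measure Ω}
    {g h : Ω → EuclideanSpace ℝ (Fin d)}
    (hh_meas : AEStronglyMeasurable h μ) (hg_meas : AEStronglyMeasurable g μ)
    (hh2 : Integrable (fun ω => ‖h ω‖ ^ 2) μ) (hg2 : Integrable (fun ω => ‖g ω‖ ^ 2) μ) :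
    Integrable (fun ω => ⟪h ω, g ω⟫) μ := by
  refine ((hh2.add hg2).div_const 2).mono (hh_meas.inner hg_meas)
    (Filter.Eventually.of_forall fun ω => ?_)
  have h1 : |⟪h ω, g ω⟫| ≤ ‖h ω‖ * ‖g ω‖ := abs_real_inner_le_norm _ _
  simp only [Real.norm_eq_abs, Pi.add_apply]
  rw [abs_of_nonneg (by positivity : (0:ℝ) ≤ (‖h ω‖ ^ 2 + ‖g ω‖ ^ 2) / 2)]
  nlinarith [sq_nonneg (‖h ω‖ - ‖g ω‖)]

open MeasureTheory in
/-- Non-asymptotic convergence rate for stochastic gradient ascent with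
conditionally unbiased (up to a positive scale α) gradients. -/
theorem nonasymptotic_convergence_rate {d : ℕ} {Ω : Type*} [MeasurableSpace Ω]
    (μ : Measure Ω) [IsProbabilityMeasure μ]
    (f : EuclideanSpace ℝ (Fin d) → ℝ) (L : ℝ) (hL : 0 < L)
    (hdiff : Differentiable ℝ f)
    (hlip : ∀ x y, ‖gradient f x - gradient f y‖ ≤ L * ‖x - y‖)
    (Lstar : ℝ) (hLstar1 : Lstar ≤ 1) (hbound : ∀ x, f x ≤ Lstar)
    (T : ℕ) (hT : 1 ≤ T)
    (α σ2 : ℝ) (hα : 0 < α) (hTlarge : ((L * α) ^ 2 : ℝ) ≤ (T : ℝ))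
    (η : ℝ) (hη : η = 1 / Real.sqrt T)
    (ℱ : ℕ → MeasurableSpace Ω) (hℱ : ∀ t, ℱ t ≤ ‹MeasurableSpace Ω›)
    (θ : ℕ → Ω → EuclideanSpace ℝ (Fin d))
    (g : ℕ → Ω → EuclideanSpace ℝ (Fin d))
    (θ₁ : EuclideanSpace ℝ (Fin d)) (hθ0 : θ 0 = fun _ => θ₁)
    (hupdate : ∀ t ω, θ (t + 1) ω = θ t ω + η • g t ω)
    (hgint : ∀ t, Integrable (g t) μ)
    (hg2int : ∀ t, Integrable (fun ω => ‖g t ω‖ ^ 2) μ)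
    (hfint : ∀ t, Integrable (fun ω => f (θ t ω)) μ)
    (hgradint : ∀ t, Integrable (fun ω => ‖gradient f (θ t ω)‖ ^ 2) μ)
    (hmean : ∀ t, μ[g t | ℱ t] =ᵐ[μ] fun ω => α • gradient f (θ t ω))
    (hsecond : ∀ t, ∀ᵐ ω ∂μ,
      (μ[fun ω' => ‖g t ω'‖ ^ 2 | ℱ t]) ω
        ≤ α ^ 2 * ‖gradient f (θ t ω)‖ ^ 2 + σ2) :
    (1 / (T : ℝ)) * ∑ t ∈ Finset.range T, ∫ ω, ‖gradient f (θ t ω)‖ ^ 2 ∂μ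
      ≤ (2 * (Lstar - f θ₁) + L * σ2) / (α * Real.sqrt T) := by
  -- basic positivity facts
  set s : ℝ := Real.sqrt T with hs_def
  have hT0 : (0:ℝ) < T := by exact_mod_cast hT
  have hs : 0 < s := Real.sqrt_pos.mpr hT0
  have hss : s * s = (T : ℝ) := Real.mul_self_sqrt hT0.le
  have hη_pos : 0 < η := by rw [hη]; positivity
  -- abbreviations
  set S : ℕ → ℝ := fun t => ∫ ω, ‖gradient f (θ t ω)‖ ^ 2 ∂μ with hS_def
  set A : ℕ → ℝ := fun t => ∫ ω, f (θ t ω) ∂μ with hA_def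
  -- inner product identity
  have hinner : ∀ t, ∫ ω, ⟪gradient f (θ t ω), g t ω⟫ ∂μ = α * S t := fun t =>
    inner_integral_eq (ℱ t) (hℱ t) μ (g t) (fun ω => gradient f (θ t ω)) α hα
      (hgint t) (hg2int t) (hgradint t) (hmean t)
  -- measurability of the gradient process
  have hhmeas : ∀ t, AEStronglyMeasurable (fun ω => gradient f (θ t ω)) μ := by
    intro t
    have h1 : AEStronglyMeasurable[ℱ t] (fun ω => α • gradient f (θ t ω)) μ :=
      stronglyMeasurable_condExp.aestronglyMeasurable.congr (hmean t)
    have h2 : AEStronglyMeasurable[ℱ t] (fun ω => gradient f (θ t ω)) μ := by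
      refine (h1.const_smul α⁻¹).congr (Filter.Eventually.of_forall fun ω => ?_)
      simp [smul_smul, inv_mul_cancel₀ hα.ne']
    obtain ⟨φ, hφ, hfφ⟩ := h2
    exact ⟨φ, hφ.mono (hℱ t), hfφ⟩
  have hinner_int : ∀ t, Integrable (fun ω => ⟪gradient f (θ t ω), g t ω⟫) μ := fun t =>
    inner_integrable' (hhmeas t) (hgint t).1 (hgradint t) (hg2int t)
  -- second moment bound
  have hsm : ∀ t, ∫ ω, ‖g t ω‖ ^ 2 ∂μ ≤ α ^ 2 * S t + σ2 := by
    intro t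
    have h1 : ∫ ω, ‖g t ω‖ ^ 2 ∂μ
        = ∫ ω, (μ[fun ω' => ‖g t ω'‖ ^ 2|ℱ t]) ω ∂μ := (integral_condExp (hℱ t)).symm
    rw [h1]
    have h2 : ∫ ω, (μ[fun ω' => ‖g t ω'‖ ^ 2|ℱ t]) ω ∂μ
        ≤ ∫ ω, (α ^ 2 * ‖gradient f (θ t ω)‖ ^ 2 + σ2) ∂μ :=
      integral_mono_ae integrable_condExp
        (((hgradint t).const_mul (α ^ 2)).add (integrable_const σ2)) (hsecond t)
    refine h2.trans_eq ?_
    rw [integral_add ((hgradint t).const_mul (α ^ 2)) (integrable_const σ2),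
      integral_const_mul, integral_const]
    simp [hS_def]
  -- pointwise descent inequality
  have hptwise : ∀ t ω, f (θ t ω) + η * ⟪gradient f (θ t ω), g t ω⟫
      - L / 2 * η ^ 2 * ‖g t ω‖ ^ 2 ≤ f (θ (t + 1) ω) := by
    intro t ω
    have hd := descent_lemma f L hL.le hdiff hlip (θ t ω) (θ (t + 1) ω)
    have hv : θ (t + 1) ω - θ t ω = η • g t ω := by rw [hupdate t ω]; abel
    rw [hv] at hd
    have e1 : ⟪gradient f (θ t ω), η • g t ω⟫ = η * ⟪gradient f (θ t ω), g t ω⟫ :=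
      real_inner_smul_right _ _ _
    have e2 : ‖η • g t ω‖ ^ 2 = η ^ 2 * ‖g t ω‖ ^ 2 := by
      rw [norm_smul, mul_pow, Real.norm_eq_abs, sq_abs]
    rw [e1, e2] at hd
    linarith
  -- integrated step inequality
  have hstep : ∀ t, A t + η * (α * S t) - L / 2 * η ^ 2 * ∫ ω, ‖g t ω‖ ^ 2 ∂μ ≤ A (t + 1) := by
    intro t
    have hLHS : Integrable (fun ω => f (θ t ω) + η * ⟪gradient f (θ t ω), g t ω⟫
        - L / 2 * η ^ 2 * ‖g t ω‖ ^ 2) μ :=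
      ((hfint t).add ((hinner_int t).const_mul η)).sub ((hg2int t).const_mul (L / 2 * η ^ 2))
    have hmono := integral_mono_ae hLHS (hfint (t + 1))
      (Filter.Eventually.of_forall (hptwise t))
    have hX : Integrable (fun ω => f (θ t ω) + η * ⟪gradient f (θ t ω), g t ω⟫) μ :=
      (hfint t).add ((hinner_int t).const_mul η)
    have hY : Integrable (fun ω => L / 2 * η ^ 2 * ‖g t ω‖ ^ 2) μ :=
      (hg2int t).const_mul (L / 2 * η ^ 2)
    have hi' : Integrable (fun ω => η * ⟪gradient f (θ t ω), g t ω⟫) μ :=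
      (hinner_int t).const_mul η
    have e : ∫ ω, (f (θ t ω) + η * ⟪gradient f (θ t ω), g t ω⟫
        - L / 2 * η ^ 2 * ‖g t ω‖ ^ 2) ∂μ
        = A t + η * (α * S t) - L / 2 * η ^ 2 * ∫ ω, ‖g t ω‖ ^ 2 ∂μ := by
      rw [integral_sub hX hY, integral_add (hfint t) hi',
        integral_const_mul, integral_const_mul, hinner t]
    rw [e] at hmono
    exact hmono
  -- per-step bound with constant c
  set c : ℝ := η * α - L / 2 * η ^ 2 * α ^ 2 with hc_def
  have hkey : ∀ t, c * S t - L / 2 * η ^ 2 * σ2 ≤ A (t + 1) - A t := by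
    intro t
    have h1 := hstep t
    have h2 := mul_le_mul_of_nonneg_left (hsm t) (by positivity : (0:ℝ) ≤ L / 2 * η ^ 2)
    rw [hc_def]
    nlinarith
  -- telescoping
  have htel : ∑ t ∈ Finset.range T, (A (t + 1) - A t) = A T - A 0 :=
    Finset.sum_range_sub A T
  have hsumle : ∑ t ∈ Finset.range T, (c * S t - L / 2 * η ^ 2 * σ2) ≤ A T - A 0 := by
    rw [← htel]
    exact Finset.sum_le_sum fun t _ => hkey t
  have hsum_eq : ∑ t ∈ Finset.range T, (c * S t - L / 2 * η ^ 2 * σ2)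
      = c * (∑ t ∈ Finset.range T, S t) - T * (L / 2 * η ^ 2 * σ2) := by
    rw [Finset.sum_sub_distrib, ← Finset.mul_sum, Finset.sum_const, Finset.card_range,
      nsmul_eq_mul]
  -- endpoints
  have hA0 : A 0 = f θ₁ := by
    rw [hA_def]; simp only [hθ0]; simp
  have hAT : A T ≤ Lstar := by
    have := integral_mono_ae (hfint T) (integrable_const Lstar)
      (Filter.Eventually.of_forall fun ω => hbound (θ T ω))
    simpa using this
  -- arithmetic conclusion
  have hSsum_nonneg : 0 ≤ ∑ t ∈ Finset.range T, S t :=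
    Finset.sum_nonneg fun t _ => integral_nonneg fun ω => by positivity
  have hη2T : η ^ 2 * T = 1 := by
    rw [hη, div_pow, one_pow, sq, hss]
    field_simp
  have hLα : L * α ≤ s := by
    have := Real.sqrt_le_sqrt hTlarge
    rwa [Real.sqrt_sq (by positivity : (0:ℝ) ≤ L * α)] at this
  have hc_lb : η * α / 2 ≤ c := by
    rw [hc_def]
    have h1 : L / 2 * η ^ 2 * α ^ 2 ≤ η * α / 2 := by
      have h2 : L * α * η ≤ 1 := by
        rw [hη, mul_one_div, div_le_one hs]
        exact hLα
      have h3 := mul_le_mul_of_nonneg_right h2 (mul_nonneg hη_pos.le hα.le)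
      nlinarith [h3]
    linarith
  have hmain : η * α / 2 * (∑ t ∈ Finset.range T, S t) ≤ (Lstar - f θ₁) + L * σ2 / 2 := by
    have h1 : c * (∑ t ∈ Finset.range T, S t) - T * (L / 2 * η ^ 2 * σ2) ≤ Lstar - f θ₁ := by
      have h0 := hsumle
      rw [hsum_eq] at h0
      linarith [hAT, le_of_eq hA0.symm]
    have h2 : (T : ℝ) * (L / 2 * η ^ 2 * σ2) = L * σ2 / 2 := by
      calc (T : ℝ) * (L / 2 * η ^ 2 * σ2) = L * σ2 / 2 * (η ^ 2 * T) := by ring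
        _ = L * σ2 / 2 := by rw [hη2T, mul_one]
    have h3 : η * α / 2 * (∑ t ∈ Finset.range T, S t)
        ≤ c * (∑ t ∈ Finset.range T, S t) :=
      mul_le_mul_of_nonneg_right hc_lb hSsum_nonneg
    linarith
  -- final manipulation
  have e1 : α * (∑ t ∈ Finset.range T, S t) ≤ (2 * (Lstar - f θ₁) + L * σ2) * s := by
    have h2 := mul_le_mul_of_nonneg_right hmain hs.le
    have h3 : η * α / 2 * (∑ t ∈ Finset.range T, S t) * s
        = α * (∑ t ∈ Finset.range T, S t) / 2 := by
      rw [hη]; field_simp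
    rw [h3] at h2
    linarith
  have hgoal : (∑ t ∈ Finset.range T, S t) * (α * s)
      ≤ (2 * (Lstar - f θ₁) + L * σ2) * (T : ℝ) := by
    have h4 := mul_le_mul_of_nonneg_right e1 hs.le
    calc (∑ t ∈ Finset.range T, S t) * (α * s)
        = α * (∑ t ∈ Finset.range T, S t) * s := by ring
      _ ≤ (2 * (Lstar - f θ₁) + L * σ2) * s * s := h4
      _ = (2 * (Lstar - f θ₁) + L * σ2) * (s * s) := by ring
      _ = (2 * (Lstar - f θ₁) + L * σ2) * T := by rw [hss]
  rw [one_div, inv_mul_eq_div, div_le_div_iff₀ hT0 (by positivity : (0:ℝ) < α * s)]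
  exact hgoal
end
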